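/- For 0 < p < 1 and α > 0, if t* ≠ 0 is a local minimizer of g(t) = (t - x)² + α|t|^p for some x ∈ ℝ, then t* satisfies the stationarity equation t* + (αp/2) sgn(t*)|t*|^{p-1} = x and the second-order condition |t*| ≥ (αp(1-p)/2)^{1/(2-p)}. -/

import Mathlib

open Filter Set

private lemma hasDerivAt_g (α p x : ℝ) (s : ℝ) (hs : 0 < s) :
    HasDerivAt (fun s : ℝ => (s - x) ^ 2 + α * |s| ^ p)
      (2 * (s - x) + α * (p * s ^ (p - 1))) s := by
  have h1 : HasDerivAt (fun u : ℝ => (u - x) ^ 2 + α * u ^ p)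
      (2 * (s - x) + α * (p * s ^ (p - 1))) s := by
    have hp1 : HasDerivAt (fun u : ℝ => (u - x) ^ 2) (2 * (s - x)) s := by
      have := ((hasDerivAt_id s).sub_const x).fun_pow 2
      simpa using this
    have hp2 : HasDerivAt (fun u : ℝ => u ^ p) (p * s ^ (p - 1)) s :=
      Real.hasDerivAt_rpow_const (Or.inl hs.ne')
    exact hp1.add (hp2.const_mul α)
  apply h1.congr_of_eventuallyEq
  filter_upwards [Ioi_mem_nhds hs] with u hu
  rw [abs_of_pos hu]

private lemma aux_pos (α p x : ℝ) (hα : 0 < α) (hp0 : 0 < p) (hp1 : p < 1)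
    (t : ℝ) (ht : 0 < t)
    (hmin : IsLocalMin (fun s : ℝ => (s - x) ^ 2 + α * |s| ^ p) t) :
    t + (α * p / 2) * t ^ (p - 1) = x ∧
      (α * p * (1 - p) / 2) ^ ((1 : ℝ) / (2 - p)) ≤ t := by
  set g : ℝ → ℝ := fun s => (s - x) ^ 2 + α * |s| ^ p with hg
  have h2p : (0 : ℝ) < 2 - p := by linarith
  have h1p : (0 : ℝ) < 1 - p := by linarith
  have hc : (0 : ℝ) < α * p * (1 - p) / 2 := by positivity
  set c : ℝ := α * p * (1 - p) / 2 with hcdef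
  -- first order condition
  have hfo : 2 * (t - x) + α * (p * t ^ (p - 1)) = 0 :=
    hmin.hasDerivAt_eq_zero (hasDerivAt_g α p x t ht)
  refine ⟨by linear_combination hfo / 2, ?_⟩
  -- second order condition
  have hkey : c ≤ t ^ (2 - p) := by
    by_contra hlt
    push_neg at hlt
    set b : ℝ := c ^ ((1 : ℝ) / (2 - p)) with hbdef
    have hb0 : 0 < b := Real.rpow_pos_of_pos hc _
    have hbc : b ^ (2 - p) = c := by
      rw [hbdef, ← Real.rpow_mul hc.le]
      rw [one_div, inv_mul_cancel₀ h2p.ne', Real.rpow_one]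
    have htb : t < b := by
      by_contra hbt
      push_neg at hbt
      have := Real.rpow_le_rpow hb0.le hbt h2p.le
      rw [hbc] at this
      linarith
    -- strict concavity on Icc (t/2) b
    have hconc : StrictConcaveOn ℝ (Icc (t / 2) b) g := by
      apply strictConcaveOn_of_deriv2_neg (convex_Icc _ _)
      · intro s hs
        have hs0 : 0 < s := lt_of_lt_of_le (by linarith) hs.1
        apply ContinuousAt.continuousWithinAt
        apply ContinuousAt.add
        · fun_prop
        · exact ((Real.continuousAt_rpow_const s p
            (Or.inl hs0.ne')).comp_of_eq (continuous_abs.continuousAt)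
            (abs_of_pos hs0)).const_smul α
      · intro s hs
        rw [interior_Icc] at hs
        have hs0 : 0 < s := lt_trans (by linarith [hs.1]) hs.1
        have hderiv : deriv g =ᶠ[nhds s]
            (fun u => 2 * (u - x) + α * (p * u ^ (p - 1))) := by
          filter_upwards [Ioi_mem_nhds hs0] with u hu
          exact (hasDerivAt_g α p x u hu).deriv
        have hψ : HasDerivAt (fun u : ℝ => 2 * (u - x) + α * (p * u ^ (p - 1)))
            (2 + α * (p * ((p - 1) * s ^ (p - 1 - 1)))) s := by
          have h1 : HasDerivAt (fun u : ℝ => 2 * (u - x)) 2 s := by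
            simpa using ((hasDerivAt_id s).sub_const x).const_mul 2
          have h2 : HasDerivAt (fun u : ℝ => u ^ (p - 1))
              ((p - 1) * s ^ (p - 1 - 1)) s :=
            Real.hasDerivAt_rpow_const (Or.inl hs0.ne')
          exact h1.add ((h2.const_mul p).const_mul α)
        have hd2 : deriv^[2] g s = 2 + α * (p * ((p - 1) * s ^ (p - 1 - 1))) := by
          show deriv (deriv g) s = _
          rw [hderiv.deriv_eq]
          exact hψ.deriv
        rw [hd2]
        -- s ^ (2-p) < c, so α p (1-p) s^(p-2) > 2
        have hsb : s ^ (2 - p) < c := by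
          have := Real.rpow_lt_rpow hs0.le hs.2 h2p
          rw [hbc] at this
          exact this
        have hinv : s ^ (p - 1 - 1) = (s ^ (2 - p))⁻¹ := by
          rw [show p - 1 - 1 = -(2 - p) by ring, Real.rpow_neg hs0.le]
        have hspos : 0 < s ^ (2 - p) := Real.rpow_pos_of_pos hs0 _
        have h2lt : 2 < α * p * (1 - p) * (s ^ (2 - p))⁻¹ := by
          rw [← div_eq_mul_inv, lt_div_iff₀ hspos]
          rw [hcdef] at hsb
          linarith
        rw [hinv]
        nlinarith [h2lt]
    -- contradiction with local min
    obtain ⟨ε, hε, hball⟩ := Metric.eventually_nhds_iff.mp hmin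
    set δ : ℝ := min (ε / 2) (min (t / 4) ((b - t) / 2)) with hδdef
    have hδ0 : 0 < δ := by
      apply lt_min (by linarith) (lt_min (by linarith) (by linarith))
    have hδε : δ < ε := lt_of_le_of_lt (min_le_left _ _) (by linarith)
    have hδt : δ ≤ t / 4 := le_trans (min_le_right _ _) (min_le_left _ _)
    have hδb : δ ≤ (b - t) / 2 := le_trans (min_le_right _ _) (min_le_right _ _)
    have hmem1 : t - δ ∈ Icc (t / 2) b := ⟨by linarith, by linarith⟩
    have hmem2 : t + δ ∈ Icc (t / 2) b := ⟨by linarith, by linarith⟩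
    have hge1 : g t ≤ g (t - δ) := hball (by rw [Real.dist_eq]; rw [abs_of_nonpos (by linarith)]; linarith)
    have hge2 : g t ≤ g (t + δ) := hball (by rw [Real.dist_eq]; rw [abs_of_nonneg (by linarith)]; linarith)
    have hne : t - δ ≠ t + δ := by intro h; linarith [h]
    have := hconc.2 hmem1 hmem2 hne (by norm_num : (0:ℝ) < 1/2)
      (by norm_num : (0:ℝ) < 1/2) (by norm_num)
    have hmid : (1/2 : ℝ) • (t - δ) + (1/2 : ℝ) • (t + δ) = t := by
      simp only [smul_eq_mul]; ring
    rw [hmid] at this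
    simp only [smul_eq_mul] at this
    clear_value g b c δ
    linarith
  -- conclude
  calc c ^ ((1:ℝ) / (2 - p)) ≤ (t ^ (2 - p)) ^ ((1:ℝ) / (2 - p)) :=
        Real.rpow_le_rpow hc.le hkey (by positivity)
    _ = t := by
        rw [← Real.rpow_mul ht.le, mul_one_div, div_self h2p.ne', Real.rpow_one]

theorem stmt_7 (α p x : ℝ) (hα : 0 < α) (hp0 : 0 < p) (hp1 : p < 1)
    (t : ℝ) (ht : t ≠ 0)
    (hmin : IsLocalMin (fun s : ℝ => (s - x) ^ 2 + α * |s| ^ p) t) :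
    t + (α * p / 2) * Real.sign t * |t| ^ (p - 1) = x ∧
      (α * p * (1 - p) / 2) ^ ((1 : ℝ) / (2 - p)) ≤ |t| := by
  rcases ht.lt_or_gt with htneg | htpos
  · -- t < 0: reflect
    have hmin' : IsLocalMin (fun s : ℝ => (s - (-x)) ^ 2 + α * |s| ^ p) (-t) := by
      have htend : Filter.Tendsto (fun s : ℝ => -s) (nhds (-t)) (nhds t) := by
        simpa using (continuous_neg.tendsto (-t))
      have hev := htend.eventually hmin
      apply hev.mono
      intro s hs
      simp only at hs ⊢
      have e1 : (-s - x) ^ 2 = (s - (-x)) ^ 2 := by ring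
      have e2 : (t - x) ^ 2 = (-t - (-x)) ^ 2 := by ring
      rw [e1, abs_neg] at hs
      rw [← e2, abs_neg]
      exact hs
    obtain ⟨heq, hineq⟩ := aux_pos α p (-x) hα hp0 hp1 (-t) (by linarith) hmin'
    rw [abs_of_neg htneg, Real.sign_of_neg htneg]
    exact ⟨by linarith [heq], hineq⟩
  · obtain ⟨heq, hineq⟩ := aux_pos α p x hα hp0 hp1 t htpos hmin
    rw [abs_of_pos htpos, Real.sign_of_pos htpos]
    exact ⟨by linarith [heq], hineq⟩
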